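/- (Discrete-time RAGE theorem, pure point part.) Let U be a unitary operator on ℓ²(ℤ,ℂ) and let ψ ∈ ℓ²(ℤ,ℂ) belong to the closed linear span of the eigenvectors of U (i.e. the spectral measure of ψ is pure point). Then for every ε > 0 there exists J ∈ ℕ such that limsup_{n→∞} Σ_{|j| ≥ J} |⟨δ_j, Uⁿψ⟩|² < ε. -/

import Mathlib

noncomputable section
open scoped ENNReal
open MeasureTheory

/-- The Hilbert space ℓ²(ℤ, ℂ). -/
abbrev l2Z := lp (fun _ : ℤ => ℂ) 2

/-- The standard orthonormal basis vector δ_j of ℓ²(ℤ, ℂ). -/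
def delta (j : ℤ) : l2Z := lp.single 2 j (1 : ℂ)

namespace RageAux

lemma summable_normsq (f : l2Z) : Summable (fun j : ℤ => ‖f j‖ ^ 2) := by
  have h := (lp.memℓp f).summable (p := 2) (by norm_num)
  have : (fun j : ℤ => ‖f j‖ ^ ((2 : ℝ≥0∞).toReal)) = fun j : ℤ => ‖f j‖ ^ 2 := by
    funext j
    rw [show ((2 : ℝ≥0∞).toReal) = ((2 : ℕ) : ℝ) by norm_num, Real.rpow_natCast]
  rwa [this] at h

/-- The restriction of `f` to `{j : |j| ≥ J}` as an element of ℓ² over the subtype. -/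
def restr (J : ℕ) (f : l2Z) : lp (fun _ : {j : ℤ // (J : ℤ) ≤ |j|} => ℂ) 2 :=
  ⟨fun j => f (j : ℤ), by
    apply memℓp_gen
    have h := ((summable_normsq f).subtype {j : ℤ | (J : ℤ) ≤ |j|})
    have : (fun j : {j : ℤ // (J : ℤ) ≤ |j|} => ‖f (j : ℤ)‖ ^ ((2 : ℝ≥0∞).toReal))
        = fun j : {j : ℤ // (J : ℤ) ≤ |j|} => ‖f (j : ℤ)‖ ^ 2 := by
      funext j
      rw [show ((2 : ℝ≥0∞).toReal) = ((2 : ℕ) : ℝ) by norm_num, Real.rpow_natCast]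
    rw [this]
    exact h⟩

@[simp] lemma restr_apply (J : ℕ) (f : l2Z) (j : {j : ℤ // (J : ℤ) ≤ |j|}) :
    (restr J f) j = f (j : ℤ) := rfl

/-- The tail norm `ν J f = (∑_{|j| ≥ J} |f j|²)^{1/2}`. -/
def ν (J : ℕ) (f : l2Z) : ℝ := ‖restr J f‖

lemma ν_nonneg (J : ℕ) (f : l2Z) : 0 ≤ ν J f := norm_nonneg _

lemma ν_sq (J : ℕ) (f : l2Z) :
    ν J f ^ 2 = ∑' j : {j : ℤ // (J : ℤ) ≤ |j|}, ‖f (j : ℤ)‖ ^ 2 := by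
  have h := lp.norm_rpow_eq_tsum (p := 2) (by norm_num) (restr J f)
  have h2 : ((2 : ℝ≥0∞).toReal) = ((2 : ℕ) : ℝ) := by norm_num
  rw [h2] at h
  simp only [Real.rpow_natCast] at h
  simpa [ν] using h

lemma norm_sq_eq (f : l2Z) : ‖f‖ ^ 2 = ∑' j : ℤ, ‖f j‖ ^ 2 := by
  have h := lp.norm_rpow_eq_tsum (p := 2) (by norm_num) f
  have h2 : ((2 : ℝ≥0∞).toReal) = ((2 : ℕ) : ℝ) := by norm_num
  rw [h2] at h
  simpa [Real.rpow_natCast] using h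

lemma ν_le_norm (J : ℕ) (f : l2Z) : ν J f ≤ ‖f‖ := by
  have hsq : ν J f ^ 2 ≤ ‖f‖ ^ 2 := by
    rw [ν_sq, norm_sq_eq]
    exact Summable.tsum_subtype_le (fun j : ℤ => ‖f j‖ ^ 2)
      {j : ℤ | (J : ℤ) ≤ |j|} (fun a => by positivity) (summable_normsq f)
  calc ν J f = Real.sqrt (ν J f ^ 2) := (Real.sqrt_sq (ν_nonneg J f)).symm
    _ ≤ Real.sqrt (‖f‖ ^ 2) := Real.sqrt_le_sqrt hsq
    _ = ‖f‖ := Real.sqrt_sq (norm_nonneg f)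

lemma restr_add (J : ℕ) (f g : l2Z) : restr J (f + g) = restr J f + restr J g := by
  apply lp.ext
  funext j
  have := lp.coeFn_add (restr J f) (restr J g)
  rw [this]
  simp [restr_apply, lp.coeFn_add f g]

lemma restr_smul (J : ℕ) (c : ℂ) (f : l2Z) : restr J (c • f) = c • restr J f := by
  apply lp.ext
  funext j
  have := lp.coeFn_smul c (restr J f)
  rw [this]
  simp [restr_apply, lp.coeFn_smul c f]

lemma ν_add (J : ℕ) (f g : l2Z) : ν J (f + g) ≤ ν J f + ν J g := by
  unfold ν
  rw [restr_add]
  exact norm_add_le _ _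

lemma ν_smul (J : ℕ) (c : ℂ) (f : l2Z) : ν J (c • f) = ‖c‖ * ν J f := by
  unfold ν
  rw [restr_smul, norm_smul]

lemma ν_anti {J J' : ℕ} (h : J ≤ J') (f : l2Z) : ν J' f ≤ ν J f := by
  have hsub : {j : ℤ | (J' : ℤ) ≤ |j|} ⊆ {j : ℤ | (J : ℤ) ≤ |j|} := by
    intro j hj
    simp only [Set.mem_setOf_eq] at hj ⊢
    exact le_trans (by exact_mod_cast h) hj
  have hsq : ν J' f ^ 2 ≤ ν J f ^ 2 := by
    rw [ν_sq, ν_sq]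
    exact ((summable_normsq f).subtype _).tsum_le_tsum_of_inj (Set.inclusion hsub) (Set.inclusion_injective hsub)
      (fun c _ => by positivity) (fun i => le_rfl)
      ((summable_normsq f).subtype _)
  calc ν J' f = Real.sqrt (ν J' f ^ 2) := (Real.sqrt_sq (ν_nonneg _ _)).symm
    _ ≤ Real.sqrt (ν J f ^ 2) := Real.sqrt_le_sqrt hsq
    _ = ν J f := Real.sqrt_sq (ν_nonneg _ _)

/-- Tails of a fixed ℓ² vector are eventually small. -/
lemma ν_small (f : l2Z) {δ : ℝ} (hδ : 0 < δ) : ∃ J : ℕ, ν J f < δ := by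
  set g : ℤ → ℝ := fun j => ‖f j‖ ^ 2 with hg
  have hsum : Summable g := summable_normsq f
  have h1 : ∀ᶠ t : Finset ℤ in Filter.atTop, (∑' x, g x) - δ ^ 2 < ∑ x ∈ t, g x := by
    have := hsum.hasSum
    have hlt : (∑' x, g x) - δ ^ 2 < ∑' x, g x := by nlinarith
    exact Filter.Tendsto.eventually this (eventually_gt_nhds hlt)
  obtain ⟨t, ht⟩ := h1.exists
  have hcompl : ∑' x : {x : ℤ // x ∉ t}, g x < δ ^ 2 := by
    have hkey := Summable.sum_add_tsum_subtype_compl hsum t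
    linarith
  refine ⟨(t.sup fun j => j.natAbs) + 1, ?_⟩
  set J : ℕ := (t.sup fun j => j.natAbs) + 1 with hJ
  have hsub : {j : ℤ | (J : ℤ) ≤ |j|} ⊆ {x : ℤ | x ∉ t} := by
    intro j hj
    simp only [Set.mem_setOf_eq] at hj ⊢
    intro hjt
    have h1 : j.natAbs ≤ t.sup fun j => j.natAbs := Finset.le_sup hjt
    have h2 : |j| = (j.natAbs : ℤ) := Int.abs_eq_natAbs j
    rw [h2] at hj
    omega
  have hν : ν J f ^ 2 < δ ^ 2 := by
    rw [ν_sq]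
    calc (∑' j : {j : ℤ | (J : ℤ) ≤ |j|}, g (j : ℤ))
        ≤ ∑' x : {x : ℤ // x ∉ t}, g x :=
          ((summable_normsq f).subtype _).tsum_le_tsum_of_inj (Set.inclusion hsub) (Set.inclusion_injective hsub)
            (fun c _ => by positivity) (fun i => le_rfl)
            ((summable_normsq f).subtype _)
      _ < δ ^ 2 := hcompl
  nlinarith [ν_nonneg J f]

lemma pow_apply_eigen (U : l2Z ≃ₗᵢ[ℂ] l2Z) {x : l2Z} {z : ℂ} (hx : U x = z • x) (n : ℕ) :
    (U ^ n) x = z ^ n • x := by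
  induction n with
  | zero => simp
  | succ n ih =>
      have : (U ^ (n + 1)) x = (U ^ n) (U x) := by
        rw [pow_succ]
        rfl
      rw [this, hx, _root_.map_smul, ih, smul_smul, ← pow_succ']

lemma norm_eigenvalue (U : l2Z ≃ₗᵢ[ℂ] l2Z) {x : l2Z} {z : ℂ} (hx0 : x ≠ 0)
    (hx : U x = z • x) : ‖z‖ = 1 := by
  have h1 : ‖U x‖ = ‖x‖ := U.norm_map x
  rw [hx, norm_smul] at h1
  have h2 : ‖x‖ ≠ 0 := norm_ne_zero_iff.mpr hx0
  field_simp at h1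
  tauto

/-- For `φ` in the span of the eigenvectors, the tails of the orbit `Uⁿφ` are
uniformly small. -/
lemma key (U : l2Z ≃ₗᵢ[ℂ] l2Z) (φ : l2Z)
    (hφ : φ ∈ (Submodule.span ℂ {φ : l2Z | φ ≠ 0 ∧ ∃ z : ℂ, U φ = z • φ} : Submodule ℂ l2Z)) :
    ∀ δ : ℝ, 0 < δ → ∃ J : ℕ, ∀ n : ℕ, ν J ((U ^ n) φ) < δ := by
  induction hφ using Submodule.span_induction with
  | mem x hx =>
      obtain ⟨hx0, z, hz⟩ := hx
      intro δ hδ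
      obtain ⟨J, hJ⟩ := ν_small x hδ
      refine ⟨J, fun n => ?_⟩
      have h1 : (U ^ n) x = z ^ n • x := pow_apply_eigen U hz n
      have h2 : ‖z‖ = 1 := norm_eigenvalue U hx0 hz
      rw [h1, ν_smul, norm_pow, h2, one_pow, one_mul]
      exact hJ
  | zero =>
      intro δ hδ
      refine ⟨0, fun n => ?_⟩
      have h0 : (U ^ n) (0 : l2Z) = 0 := map_zero _
      rw [h0]
      have : ν 0 (0 : l2Z) ≤ ‖(0 : l2Z)‖ := ν_le_norm _ _
      rw [norm_zero] at this
      linarith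
  | add x y hx hy px py =>
      intro δ hδ
      obtain ⟨J₁, hJ₁⟩ := px (δ / 2) (by linarith)
      obtain ⟨J₂, hJ₂⟩ := py (δ / 2) (by linarith)
      refine ⟨max J₁ J₂, fun n => ?_⟩
      have h1 : (U ^ n) (x + y) = (U ^ n) x + (U ^ n) y := map_add _ _ _
      rw [h1]
      calc ν (max J₁ J₂) ((U ^ n) x + (U ^ n) y)
          ≤ ν (max J₁ J₂) ((U ^ n) x) + ν (max J₁ J₂) ((U ^ n) y) := ν_add _ _ _
        _ ≤ ν J₁ ((U ^ n) x) + ν J₂ ((U ^ n) y) :=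
            add_le_add (ν_anti (le_max_left _ _) _) (ν_anti (le_max_right _ _) _)
        _ < δ / 2 + δ / 2 := add_lt_add (hJ₁ n) (hJ₂ n)
        _ = δ := by ring
  | smul c x hx px =>
      intro δ hδ
      have hc1 : (0 : ℝ) < ‖c‖ + 1 := by positivity
      obtain ⟨J, hJ⟩ := px (δ / (‖c‖ + 1)) (by positivity)
      refine ⟨J, fun n => ?_⟩
      have h1 : (U ^ n) (c • x) = c • (U ^ n) x := map_smul _ _ _
      rw [h1, ν_smul]
      calc ‖c‖ * ν J ((U ^ n) x) ≤ ‖c‖ * (δ / (‖c‖ + 1)) :=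
            mul_le_mul_of_nonneg_left (hJ n).le (norm_nonneg c)
        _ < (‖c‖ + 1) * (δ / (‖c‖ + 1)) := by
            apply mul_lt_mul_of_pos_right (by linarith) (by positivity)
        _ = δ := by field_simp

lemma inner_delta (j : ℤ) (f : l2Z) : (inner ℂ (delta j) f : ℂ) = f j := by
  simp [delta, lp.inner_single_left]

end RageAux

open RageAux in
/-- discrete-time RAGE theorem, pure point part. If ψ lies in the
closed span of the eigenvectors of a unitary U, then for every ε > 0 there is a J with
limsup_{n→∞} Σ_{|j| ≥ J} |⟨δ_j, Uⁿψ⟩|² < ε. -/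
theorem rage_pure_point
    (U : l2Z ≃ₗᵢ[ℂ] l2Z) (ψ : l2Z)
    (hψ : ψ ∈ closure
      (Submodule.span ℂ {φ : l2Z | φ ≠ 0 ∧ ∃ z : ℂ, U φ = z • φ} : Set l2Z)) :
    ∀ ε : ℝ, 0 < ε → ∃ J : ℕ,
      Filter.limsup
        (fun n : ℕ => ∑' j : {j : ℤ // (J : ℤ) ≤ |j|},
          ‖(inner ℂ (delta (j : ℤ)) ((U ^ n) ψ) : ℂ)‖ ^ 2)
        Filter.atTop < ε := by
  intro ε hε
  set δ : ℝ := Real.sqrt ε / 3 with hδdef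
  have hδ : 0 < δ := by
    have := Real.sqrt_pos.mpr hε
    positivity
  obtain ⟨φ, hφmem, hφdist⟩ := Metric.mem_closure_iff.mp hψ δ hδ
  obtain ⟨J, hJ⟩ := key U φ hφmem δ hδ
  refine ⟨J, ?_⟩
  have hbound : ∀ n : ℕ,
      (∑' j : {j : ℤ // (J : ℤ) ≤ |j|},
        ‖(inner ℂ (delta (j : ℤ)) ((U ^ n) ψ) : ℂ)‖ ^ 2) ≤ (2 * δ) ^ 2 := by
    intro n
    have heq : (∑' j : {j : ℤ // (J : ℤ) ≤ |j|},
        ‖(inner ℂ (delta (j : ℤ)) ((U ^ n) ψ) : ℂ)‖ ^ 2) = ν J ((U ^ n) ψ) ^ 2 := by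
      rw [ν_sq]
      apply tsum_congr
      intro j
      rw [inner_delta]
    rw [heq]
    have hsplit : (U ^ n) ψ = (U ^ n) φ + (U ^ n) (ψ - φ) := by
      rw [← map_add]
      congr 1
      abel
    have h1 : ν J ((U ^ n) ψ) ≤ ν J ((U ^ n) φ) + ν J ((U ^ n) (ψ - φ)) := by
      rw [hsplit]; exact ν_add _ _ _
    have h2 : ν J ((U ^ n) (ψ - φ)) ≤ ‖ψ - φ‖ := by
      calc ν J ((U ^ n) (ψ - φ)) ≤ ‖(U ^ n) (ψ - φ)‖ := ν_le_norm _ _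
        _ = ‖ψ - φ‖ := (U ^ n).norm_map _
    have h3 : ‖ψ - φ‖ < δ := by
      rw [← dist_eq_norm]; exact hφdist
    have h4 : ν J ((U ^ n) ψ) ≤ 2 * δ := by
      have := hJ n
      linarith
    exact pow_le_pow_left₀ (ν_nonneg _ _) h4 2
  have hlimsup : Filter.limsup
      (fun n : ℕ => ∑' j : {j : ℤ // (J : ℤ) ≤ |j|},
        ‖(inner ℂ (delta (j : ℤ)) ((U ^ n) ψ) : ℂ)‖ ^ 2) Filter.atTop ≤ (2 * δ) ^ 2 := by
    apply Filter.limsup_le_of_le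
    · refine Filter.isCoboundedUnder_le_of_le (Filter.atTop : Filter ℕ) (x := 0) fun n => ?_
      exact tsum_nonneg fun j => by positivity
    · exact Filter.Eventually.of_forall hbound
  have hfinal : (2 * δ) ^ 2 < ε := by
    have hsq : Real.sqrt ε ^ 2 = ε := Real.sq_sqrt hε.le
    nlinarith [Real.sqrt_pos.mpr hε]
  exact lt_of_le_of_lt hlimsup hfinal
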